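/- Under the assumptions 0 < x_C, x_D, y_C, y_D < 1, the sum u_C - u_D := Σ_{t=0}^∞ Mᵗ(p_{1C} - p_{1D}) · (R, S, T, P)ᵀ converges and equals [(y_C - y_D)·(x_e(R-S) + (1-x_e)(T-P)) - (y_e(T-R) + (1-y_e)(P-S))] / [1 - (x_C - x_D)(y_C - y_D)]. -/
import Mathlib

open Matrix

set_option maxHeartbeats 400000 in
theorem payoff_difference_sum
    (T R P S : ℝ)
    (xC xD yC yD : ℝ)
    (hxC : 0 < xC) (hxC1 : xC < 1) (hxD : 0 < xD) (hxD1 : xD < 1)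
    (hyC : 0 < yC) (hyC1 : yC < 1) (hyD : 0 < yD) (hyD1 : yD < 1)
    (xe ye : ℝ)
    (hxe : xe = (xD + (xC - xD) * yD) / (1 - (xC - xD) * (yC - yD)))
    (hye : ye = (yD + (yC - yD) * xD) / (1 - (xC - xD) * (yC - yD)))
    (M : Matrix (Fin 4) (Fin 4) ℝ)
    (hM : M = !![xC * yC, xD * yC, xC * yD, xD * yD;
                 xC * (1 - yC), xD * (1 - yC), xC * (1 - yD), xD * (1 - yD);
                 (1 - xC) * yC, (1 - xD) * yC, (1 - xC) * yD, (1 - xD) * yD;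
                 (1 - xC) * (1 - yC), (1 - xD) * (1 - yC), (1 - xC) * (1 - yD),
                   (1 - xD) * (1 - yD)])
    (p1C p1D : Fin 4 → ℝ)
    (hp1C : p1C = ![ye, 1 - ye, 0, 0])
    (hp1D : p1D = ![0, 0, ye, 1 - ye]) :
    HasSum (fun t : ℕ => (M ^ t).mulVec (p1C - p1D) ⬝ᵥ ![R, S, T, P])
      (((yC - yD) * (xe * (R - S) + (1 - xe) * (T - P)) -
          (ye * (T - R) + (1 - ye) * (P - S))) /
        (1 - (xC - xD) * (yC - yD))) := by
  set r : ℝ := (xC - xD) * (yC - yD) with hrdef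
  have h1 : |xC - xD| < 1 := abs_lt.mpr ⟨by linarith, by linarith⟩
  have h2 : |yC - yD| < 1 := abs_lt.mpr ⟨by linarith, by linarith⟩
  have hr : |r| < 1 := by
    rw [hrdef, abs_mul]
    nlinarith [abs_nonneg (xC - xD), abs_nonneg (yC - yD)]
  have hrlt : r < 1 := lt_of_le_of_lt (le_abs_self r) hr
  have hne : 1 - r ≠ 0 := by linarith
  set w : Fin 4 → ℝ := ![xe, -xe, 1 - xe, xe - 1] with hw
  have hv : p1C - p1D = ![ye, 1 - ye, -ye, ye - 1] := by
    funext i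
    fin_cases i <;> simp [hp1C, hp1D] <;> ring
  have hMv : M.mulVec (p1C - p1D) = (yC - yD) • w := by
    funext i
    fin_cases i <;>
      simp [hM, hp1C, hp1D, hw, mulVec, dotProduct, Fin.sum_univ_four] <;>
      rw [hxe, hye] <;> field_simp <;> ring
  have hMw : M.mulVec w = (xC - xD) • (p1C - p1D) := by
    funext i
    fin_cases i <;>
      simp [hM, hp1C, hp1D, hw, mulVec, dotProduct, Fin.sum_univ_four] <;>
      rw [hxe, hye] <;> field_simp <;> ring
  have key : ∀ k : ℕ,
      (M ^ (2 * k)).mulVec (p1C - p1D) = r ^ k • (p1C - p1D) ∧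
      (M ^ (2 * k + 1)).mulVec (p1C - p1D) = (r ^ k * (yC - yD)) • w := by
    intro k
    induction k with
    | zero =>
      constructor
      · simp
      · simp [hMv]
    | succ k ih =>
      have e1 : 2 * (k + 1) = (2 * k + 1) + 1 := by ring
      have hA : (M ^ (2 * (k + 1))).mulVec (p1C - p1D) = r ^ (k + 1) • (p1C - p1D) := by
        rw [e1, pow_succ', ← mulVec_mulVec, ih.2, mulVec_smul, hMw, smul_smul]
        rw [pow_succ]
        congr 1
        ring
      refine ⟨hA, ?_⟩
      have e2 : 2 * (k + 1) + 1 = (2 * (k + 1)) + 1 := rfl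
      rw [e2, pow_succ', ← mulVec_mulVec, hA, mulVec_smul, hMv, smul_smul]
  set A : ℝ := -(ye * (T - R) + (1 - ye) * (P - S)) with hA
  set B : ℝ := xe * (R - S) + (1 - xe) * (T - P) with hB
  have hvd : (p1C - p1D) ⬝ᵥ ![R, S, T, P] = A := by
    simp [hp1C, hp1D, dotProduct, Fin.sum_univ_four, hA]; ring
  have hwd : w ⬝ᵥ ![R, S, T, P] = B := by
    simp [hw, dotProduct, Fin.sum_univ_four, hB]; ring
  set f : ℕ → ℝ := fun t => (M ^ t).mulVec (p1C - p1D) ⬝ᵥ ![R, S, T, P] with hf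
  have hgeo := hasSum_geometric_of_abs_lt_one hr
  have hE : HasSum (fun k : ℕ => f (2 * k)) (A * (1 - r)⁻¹) := by
    have : (fun k : ℕ => f (2 * k)) = fun k => A * r ^ k := by
      funext k
      rw [hf]
      simp only []
      rw [(key k).1, smul_dotProduct, hvd, smul_eq_mul, mul_comm]
    rw [this]; exact hgeo.mul_left A
  have hO : HasSum (fun k : ℕ => f (2 * k + 1)) (((yC - yD) * B) * (1 - r)⁻¹) := by
    have : (fun k : ℕ => f (2 * k + 1)) = fun k => ((yC - yD) * B) * r ^ k := by
      funext k
      rw [hf]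
      simp only []
      rw [(key k).2, smul_dotProduct, hwd, smul_eq_mul]
      ring
    rw [this]; exact hgeo.mul_left _
  have hval : (((yC - yD) * (xe * (R - S) + (1 - xe) * (T - P)) -
          (ye * (T - R) + (1 - ye) * (P - S))) /
        (1 - (xC - xD) * (yC - yD))) = A * (1 - r)⁻¹ + ((yC - yD) * B) * (1 - r)⁻¹ := by
    rw [hA, hB, ← hrdef]
    field_simp
    ring
  rw [hval]
  exact HasSum.even_add_odd hE hO
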